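/- Let H be a pre-Hilbert left 𝕆-module and let u, v ∈ H be associative elements, i.e. (pq)·u = p·(q·u) and (pq)·v = p·(q·v) for all p,q ∈ 𝕆. Then ⟨u, v⟩ is a real number (its imaginary part vanishes). -/

import Mathlib

noncomputable section

/-- The octonions, realized as the Cayley–Dickson double of the quaternions. -/
abbrev 𝕆 : Type := Quaternion ℝ × Quaternion ℝ

/-- Octonion multiplication via the Cayley–Dickson formula
`(a,b)(c,d) = (ac - d̄b, da + bc̄)`. -/
def omul (x y : 𝕆) : 𝕆 :=
  (x.1 * y.1 - star y.2 * x.2, y.2 * x.1 + x.2 * star y.1)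

/-- Octonionic conjugation. -/
def oconj (x : 𝕆) : 𝕆 := (star x.1, -x.2)

/-- The octonion `1`. -/
def oone : 𝕆 := (1, 0)

/-- Real part of an octonion. -/
def ore (x : 𝕆) : ℝ := x.1.re

/-- Embedding of the reals into the octonions. -/
def oreal (r : ℝ) : 𝕆 := ((r : Quaternion ℝ), 0)

/-- Squared norm of an octonion. -/
def onormSq (x : 𝕆) : ℝ := ore (omul x (oconj x))

open Quaternion

-- versions of the component lemmas for literal quaternions
lemma qlit_re_mul_left (a : QuaternionAlgebra ℝ (-1) 0 (-1)) (b : ℍ[ℝ]) :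
    (@HMul.hMul ℍ[ℝ] ℍ[ℝ] ℍ[ℝ] _ a b).re = a.re * b.re - a.imI * b.imI - a.imJ * b.imJ - a.imK * b.imK :=
  Quaternion.re_mul a b

lemma qlit_re_mul_right (a : ℍ[ℝ]) (b : QuaternionAlgebra ℝ (-1) 0 (-1)) :
    (@HMul.hMul ℍ[ℝ] ℍ[ℝ] ℍ[ℝ] _ a b).re = a.re * b.re - a.imI * b.imI - a.imJ * b.imJ - a.imK * b.imK :=
  Quaternion.re_mul a b

lemma qlit_re_star (a : QuaternionAlgebra ℝ (-1) 0 (-1)) :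
    (@star ℍ[ℝ] _ a).re = a.re :=
  Quaternion.re_star a

lemma qlit_imI_mul_left (a : QuaternionAlgebra ℝ (-1) 0 (-1)) (b : ℍ[ℝ]) :
    (@HMul.hMul ℍ[ℝ] ℍ[ℝ] ℍ[ℝ] _ a b).imI = a.re * b.imI + a.imI * b.re + a.imJ * b.imK - a.imK * b.imJ :=
  Quaternion.imI_mul a b

lemma qlit_imI_mul_right (a : ℍ[ℝ]) (b : QuaternionAlgebra ℝ (-1) 0 (-1)) :
    (@HMul.hMul ℍ[ℝ] ℍ[ℝ] ℍ[ℝ] _ a b).imI = a.re * b.imI + a.imI * b.re + a.imJ * b.imK - a.imK * b.imJ :=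
  Quaternion.imI_mul a b

lemma qlit_imI_star (a : QuaternionAlgebra ℝ (-1) 0 (-1)) :
    (@star ℍ[ℝ] _ a).imI = -a.imI :=
  Quaternion.imI_star a

lemma qlit_imJ_mul_left (a : QuaternionAlgebra ℝ (-1) 0 (-1)) (b : ℍ[ℝ]) :
    (@HMul.hMul ℍ[ℝ] ℍ[ℝ] ℍ[ℝ] _ a b).imJ = a.re * b.imJ - a.imI * b.imK + a.imJ * b.re + a.imK * b.imI :=
  Quaternion.imJ_mul a b

lemma qlit_imJ_mul_right (a : ℍ[ℝ]) (b : QuaternionAlgebra ℝ (-1) 0 (-1)) :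
    (@HMul.hMul ℍ[ℝ] ℍ[ℝ] ℍ[ℝ] _ a b).imJ = a.re * b.imJ - a.imI * b.imK + a.imJ * b.re + a.imK * b.imI :=
  Quaternion.imJ_mul a b

lemma qlit_imJ_star (a : QuaternionAlgebra ℝ (-1) 0 (-1)) :
    (@star ℍ[ℝ] _ a).imJ = -a.imJ :=
  Quaternion.imJ_star a

lemma qlit_imK_mul_left (a : QuaternionAlgebra ℝ (-1) 0 (-1)) (b : ℍ[ℝ]) :
    (@HMul.hMul ℍ[ℝ] ℍ[ℝ] ℍ[ℝ] _ a b).imK = a.re * b.imK + a.imI * b.imJ - a.imJ * b.imI + a.imK * b.re :=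
  Quaternion.imK_mul a b

lemma qlit_imK_mul_right (a : ℍ[ℝ]) (b : QuaternionAlgebra ℝ (-1) 0 (-1)) :
    (@HMul.hMul ℍ[ℝ] ℍ[ℝ] ℍ[ℝ] _ a b).imK = a.re * b.imK + a.imI * b.imJ - a.imJ * b.imI + a.imK * b.re :=
  Quaternion.imK_mul a b

lemma qlit_imK_star (a : QuaternionAlgebra ℝ (-1) 0 (-1)) :
    (@star ℍ[ℝ] _ a).imK = -a.imK :=
  Quaternion.imK_star a



-- component simp set
lemma omul_sub_right (q x y : 𝕆) : omul q (x - y) = omul q x - omul q y := by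
  simp only [omul, Prod.fst_sub, Prod.snd_sub, star_sub, Prod.mk_sub_mk, Prod.mk.injEq]
  constructor <;> noncomm_ring

lemma ore_sub (x y : 𝕆) : ore (x - y) = ore x - ore y := rfl

lemma oconj_oconj (x : 𝕆) : oconj (oconj x) = x := by
  simp [oconj]

lemma oconj_omul (x y : 𝕆) : oconj (omul x y) = omul (oconj y) (oconj x) := by
  simp only [omul, oconj, Prod.mk.injEq, star_sub, star_mul, star_star, star_add, star_neg]
  constructor <;> noncomm_ring

lemma ore_omul_assoc (q p a : 𝕆) : ore (omul (omul q p) a) = ore (omul q (omul p a)) := by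
  obtain ⟨q1, q2⟩ := q; obtain ⟨p1, p2⟩ := p; obtain ⟨a1, a2⟩ := a
  simp only [omul, ore, Quaternion.re_sub, Quaternion.re_add, Quaternion.re_mul,
    Quaternion.re_star, Quaternion.imI_star, Quaternion.imJ_star, Quaternion.imK_star,
    Quaternion.imI_mul, Quaternion.imJ_mul, Quaternion.imK_mul, Quaternion.imI_sub,
    Quaternion.imJ_sub, Quaternion.imK_sub, Quaternion.imI_add, Quaternion.imJ_add,
    Quaternion.imK_add, Quaternion.re_neg, Quaternion.imI_neg, Quaternion.imJ_neg,
    Quaternion.imK_neg]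
  ring

lemma ore_nondegen (x : 𝕆) (H : ∀ q : 𝕆, ore (omul q x) = 0) : x = 0 := by
  obtain ⟨x1, x2⟩ := x
  have h1 := H ((1 : Quaternion ℝ), 0)
  have h2 := H ((⟨0,1,0,0⟩ : Quaternion ℝ), 0)
  have h3 := H ((⟨0,0,1,0⟩ : Quaternion ℝ), 0)
  have h4 := H ((⟨0,0,0,1⟩ : Quaternion ℝ), 0)
  have h5 := H ((0 : Quaternion ℝ), 1)
  have h6 := H ((0 : Quaternion ℝ), ⟨0,1,0,0⟩)
  have h7 := H ((0 : Quaternion ℝ), ⟨0,0,1,0⟩)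
  have h8 := H ((0 : Quaternion ℝ), ⟨0,0,0,1⟩)
  simp only [ore, omul, Quaternion.re_sub, Quaternion.re_mul, Quaternion.re_star,
    Quaternion.imI_star, Quaternion.imJ_star, Quaternion.imK_star, Quaternion.re_one,
    Quaternion.imI_one, Quaternion.imJ_one, Quaternion.imK_one, Quaternion.re_zero,
    Quaternion.imI_zero, Quaternion.imJ_zero, Quaternion.imK_zero, qlit_re_mul_left, qlit_re_mul_right, qlit_re_star, qlit_imI_mul_left, qlit_imI_mul_right, qlit_imI_star, qlit_imJ_mul_left, qlit_imJ_mul_right, qlit_imJ_star, qlit_imK_mul_left, qlit_imK_mul_right, qlit_imK_star] at h1 h2 h3 h4 h5 h6 h7 h8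
  refine Prod.ext ?_ ?_ <;> apply Quaternion.ext <;>
    simp only [Prod.fst_zero, Prod.snd_zero, Quaternion.re_zero, Quaternion.imI_zero,
      Quaternion.imJ_zero, Quaternion.imK_zero] <;> linarith

set_option maxHeartbeats 1000000 in
lemma nucleus (a : 𝕆) (H : ∀ p r : 𝕆, omul (omul p a) r = omul p (omul a r)) :
    a = oreal (ore a) := by
  obtain ⟨x, y⟩ := a
  have h1 := H ((⟨0,1,0,0⟩ : Quaternion ℝ), 0) ((0 : Quaternion ℝ), 1)
  have h2 := H ((⟨0,0,1,0⟩ : Quaternion ℝ), 0) ((0 : Quaternion ℝ), 1)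
  have h3 := H ((⟨0,1,0,0⟩ : Quaternion ℝ), 0) ((0 : Quaternion ℝ), ⟨0,0,1,0⟩)
  simp only [omul, Prod.mk.injEq, Quaternion.ext_iff, Quaternion.re_sub, Quaternion.re_add,
    Quaternion.imI_sub, Quaternion.imI_add, Quaternion.imJ_sub, Quaternion.imJ_add,
    Quaternion.imK_sub, Quaternion.imK_add, Quaternion.re_mul, Quaternion.imI_mul,
    Quaternion.imJ_mul, Quaternion.imK_mul, Quaternion.re_star, Quaternion.imI_star,
    Quaternion.imJ_star, Quaternion.imK_star, Quaternion.re_one, Quaternion.imI_one,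
    Quaternion.imJ_one, Quaternion.imK_one, Quaternion.re_zero, Quaternion.imI_zero,
    Quaternion.imJ_zero, Quaternion.imK_zero, qlit_re_mul_left, qlit_re_mul_right, qlit_re_star, qlit_imI_mul_left, qlit_imI_mul_right, qlit_imI_star, qlit_imJ_mul_left, qlit_imJ_mul_right, qlit_imJ_star, qlit_imK_mul_left, qlit_imK_mul_right, qlit_imK_star] at h1 h2 h3
  obtain ⟨⟨a1,a2,a3,a4⟩,b1,b2,b3,b4⟩ := h1
  obtain ⟨⟨c1,c2,c3,c4⟩,d1,d2,d3,d4⟩ := h2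
  obtain ⟨⟨e1,e2,e3,e4⟩,f1,f2,f3,f4⟩ := h3
  simp only [oreal, ore, Prod.mk.injEq, Quaternion.ext_iff, Quaternion.re_coe,
    Quaternion.imI_coe, Quaternion.imJ_coe, Quaternion.imK_coe, Quaternion.re_zero,
    Quaternion.imI_zero, Quaternion.imJ_zero, Quaternion.imK_zero]
  refine ⟨⟨trivial, ?_, ?_, ?_⟩, ?_, ?_, ?_, ?_⟩ <;> linarith


/-- A pre-Hilbert left `𝕆`-module: a real vector space `H` with an `ℝ`-linear
left `𝕆`-scalar multiplication `sm` satisfying `1·x = x` and the alternating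
left-associator law, together with an `ℝ`-bilinear `𝕆`-valued inner product `inn`
which is `𝕆`-para-linear, hermitian and positive definite. -/
structure PreHilbO (H : Type*) [AddCommGroup H] [Module ℝ H] where
  sm : 𝕆 →ₗ[ℝ] H →ₗ[ℝ] H
  inn : H →ₗ[ℝ] H →ₗ[ℝ] 𝕆
  one_sm : ∀ x : H, sm oone x = x
  alt : ∀ (p q : 𝕆) (x : H),
    sm (omul p q) x - sm p (sm q x) = -(sm (omul q p) x - sm q (sm p x))
  para : ∀ (p : 𝕆) (u v : H), ore (inn (sm p u) v - omul p (inn u v)) = 0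
  herm : ∀ u v : H, inn u v = oconj (inn v u)
  pos : ∀ u : H, ∃ r : ℝ, 0 ≤ r ∧ inn u u = oreal r
  posdef : ∀ u : H, inn u u = 0 → u = 0


lemma full_linear {H : Type*} [AddCommGroup H] [Module ℝ H] (h : PreHilbO H) (u : H)
    (hu : ∀ p q : 𝕆, h.sm (omul p q) u = h.sm p (h.sm q u)) (p : 𝕆) (w : H) :
    h.inn (h.sm p u) w = omul p (h.inn u w) := by
  have key : ∀ q : 𝕆, ore (omul q (h.inn (h.sm p u) w - omul p (h.inn u w))) = 0 := by
    intro q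
    rw [omul_sub_right, ore_sub]
    have h1 := h.para q (h.sm p u) w
    rw [← hu q p] at h1
    have h2 := h.para (omul q p) u w
    rw [ore_sub] at h1 h2
    have h3 := ore_omul_assoc q p (h.inn u w)
    linarith
  have := ore_nondegen _ key
  exact sub_eq_zero.mp this


/-- The octonionic inner product of two associative elements is real. -/
theorem stmt_7 {H : Type*} [AddCommGroup H] [Module ℝ H] (h : PreHilbO H)
    (u v : H)
    (hu : ∀ p q : 𝕆, h.sm (omul p q) u = h.sm p (h.sm q u))
    (hv : ∀ p q : 𝕆, h.sm (omul p q) v = h.sm p (h.sm q v)) :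
    ∃ r : ℝ, h.inn u v = oreal r := by
  set a := h.inn u v with ha
  have key : ∀ p r : 𝕆, omul (omul p a) (oconj r) = omul p (omul a (oconj r)) := by
    intro p r
    have e1 : h.inn (h.sm p u) (h.sm r v) = omul p (omul a (oconj r)) := by
      rw [full_linear h u hu p (h.sm r v), h.herm u (h.sm r v),
        full_linear h v hv r u, h.herm v u, ← ha, oconj_omul, oconj_oconj]
    have e2 : h.inn (h.sm p u) (h.sm r v) = omul (omul p a) (oconj r) := by
      rw [h.herm (h.sm p u) (h.sm r v), full_linear h v hv r (h.sm p u),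
        h.herm v (h.sm p u), full_linear h u hu p v, ← ha, oconj_omul, oconj_oconj]
    rw [← e1, e2]
  have key' : ∀ p q : 𝕆, omul (omul p a) q = omul p (omul a q) := by
    intro p q
    have := key p (oconj q)
    rwa [oconj_oconj] at this
  exact ⟨ore a, nucleus a key'⟩
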